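/- In the Poisson algebra of binary quadratic forms ap² + 2bpq + cq² on the symplectic plane (with bracket {F,F'} = ∂_pF ∂_qF' - ∂_qF ∂_pF'), the Tomihisa identity {F₁,{{F₂,F₃},{F₄,F₅}}} + {F₃,{{F₂,F₅},{F₄,F₁}}} + {F₅,{{F₂,F₁},{F₄,F₃}}} = 0 holds for any five quadratic forms F₁,...,F₅. -/

import Mathlib

/-- Symplectic Poisson bracket on the plane (p,q):
{F,F'} = ∂_pF ∂_qF' - ∂_qF ∂_pF'. -/
noncomputable def symBracket (F G : ℝ → ℝ → ℝ) : ℝ → ℝ → ℝ := fun p q =>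
  deriv (fun t => F t q) p * deriv (fun s => G p s) q -
    deriv (fun s => F p s) q * deriv (fun t => G t q) p

/-- A binary quadratic form ap² + 2bpq + cq². -/
def quadForm (a b c : ℝ) : ℝ → ℝ → ℝ := fun p q =>
  a * p ^ 2 + 2 * b * p * q + c * q ^ 2

lemma deriv_quad (a b c q : ℝ) :
    deriv (fun t => a * t ^ 2 + 2 * b * t * q + c * q ^ 2) = fun p => 2 * a * p + 2 * b * q := by
  funext p
  have h1 : HasDerivAt (fun t : ℝ => t ^ 2) (2 * p) p := by simpa using hasDerivAt_pow 2 p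
  have h2 : HasDerivAt (fun t : ℝ => a * t ^ 2 + 2 * b * t * q + c * q ^ 2)
      (2 * a * p + 2 * b * q) p := by
    have := ((h1.const_mul a).add
      (((hasDerivAt_id p).const_mul (2 * b)).mul_const q)).add_const (c * q ^ 2)
    refine this.congr_deriv ?_
    ring
  exact h2.deriv

lemma deriv_quad' (a b c p : ℝ) :
    deriv (fun s => a * p ^ 2 + 2 * b * p * s + c * s ^ 2) = fun q => 2 * b * p + 2 * c * q := by
  funext q
  have h1 : HasDerivAt (fun s : ℝ => s ^ 2) (2 * q) q := by simpa using hasDerivAt_pow 2 q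
  have h2 : HasDerivAt (fun s : ℝ => a * p ^ 2 + 2 * b * p * s + c * s ^ 2)
      (2 * b * p + 2 * c * q) q := by
    have h3 := (((hasDerivAt_id q).const_mul (2 * b * p)).add (h1.const_mul c)).const_add (a * p ^ 2)
    simp only [id_eq] at h3
    have e : (fun s : ℝ => a * p ^ 2 + 2 * b * p * s + c * s ^ 2) =
        (fun x => a * p ^ 2 + ((fun y : ℝ => 2 * b * p * y) + fun y : ℝ => c * y ^ 2 : ℝ → ℝ) x) := by
      funext x; simp only [Pi.add_apply]; ring
    rw [e]
    refine h3.congr_deriv ?_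
    ring
  exact h2.deriv

lemma bracket_quad (a b c a' b' c' : ℝ) :
    symBracket (quadForm a b c) (quadForm a' b' c') =
      quadForm (4 * (a * b' - b * a')) (2 * (a * c' - c * a')) (4 * (b * c' - c * b')) := by
  funext p q
  simp only [symBracket, quadForm, deriv_quad, deriv_quad']
  ring

/-- Tomihisa identity in the Poisson algebra of binary quadratic forms. -/
theorem tomihisa_quadForms (a₁ b₁ c₁ a₂ b₂ c₂ a₃ b₃ c₃ a₄ b₄ c₄ a₅ b₅ c₅ : ℝ) :
    ∀ p q : ℝ,
      symBracket (quadForm a₁ b₁ c₁)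
          (symBracket (symBracket (quadForm a₂ b₂ c₂) (quadForm a₃ b₃ c₃))
            (symBracket (quadForm a₄ b₄ c₄) (quadForm a₅ b₅ c₅))) p q +
      symBracket (quadForm a₃ b₃ c₃)
          (symBracket (symBracket (quadForm a₂ b₂ c₂) (quadForm a₅ b₅ c₅))
            (symBracket (quadForm a₄ b₄ c₄) (quadForm a₁ b₁ c₁))) p q +
      symBracket (quadForm a₅ b₅ c₅)
          (symBracket (symBracket (quadForm a₂ b₂ c₂) (quadForm a₁ b₁ c₁))
            (symBracket (quadForm a₄ b₄ c₄) (quadForm a₃ b₃ c₃))) p q = 0 := by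
  intro p q
  simp only [bracket_quad, quadForm]
  ring
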